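/- Let d ≥ 3 be an integer and define the discrete Laplacian symbol T(η) := Σ_{j=1}^d 4 sin²(η_j/2) for η ∈ [−π, π]^d. Then for all u > 0 and α > 0, u ∫_{{η ∈ [−π,π]^d : T(η) < u/α²}} T(η)^{-1} dη/(2π)^d ≤ (|S^{d−1}| / (2^{2d}(d−2) α^{d−2})) · u · min(u, 4dα²)^{d/2 − 1}, where |S^{d−1}| denotes the surface measure of the unit sphere in ℝ^d. -/

import Mathlib

open Set Function Metric MeasureTheory intervalIntegral
open scoped ENNReal NNReal

local notation "dim" => Module.finrank ℝ

section aux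
variable {E : Type*} [NormedAddCommGroup E] [NormedSpace ℝ E] [MeasurableSpace E]
  [Nontrivial E] (μ : Measure E) [FiniteDimensional ℝ E] [BorelSpace E] [μ.IsAddHaarMeasure]

lemma my_lintegral_fun_norm_addHaar (f : ℝ → ℝ≥0∞) (hf : Measurable f) :
    ∫⁻ x, f ‖x‖ ∂μ
      = dim E * μ (ball 0 1) * ∫⁻ y in Ioi (0 : ℝ), ENNReal.ofReal (y ^ (dim E - 1)) * f y := by
  calc
    ∫⁻ x, f (‖x‖) ∂μ = ∫⁻ x : ({(0)}ᶜ : Set E), f (‖x.1‖) ∂(μ.comap (↑)) := by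
      rw [lintegral_subtype_comap (measurableSet_singleton _).compl fun x ↦ f (‖x‖),
        restrict_compl_singleton]
    _ = ∫⁻ x : sphere (0 : E) 1 × Ioi (0 : ℝ), f x.2
        ∂μ.toSphere.prod (.volumeIoiPow (dim E - 1)) := by
      rw [← μ.measurePreserving_homeomorphUnitSphereProd.lintegral_comp_emb
        (Homeomorph.measurableEmbedding _) (fun p ↦ f p.2)]
      exact lintegral_congr fun x ↦ by simp
    _ = μ.toSphere univ * ∫⁻ y : Ioi (0 : ℝ), f y ∂(.volumeIoiPow (dim E - 1)) := by
      rw [lintegral_prod_symm' _ (show Measurable fun x : sphere (0:E) 1 × Ioi (0:ℝ) => f ↑x.2 from hf.comp (measurable_subtype_coe.comp measurable_snd))]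
      simp only [lintegral_const]
      rw [lintegral_mul_const'' _ (show Measurable fun y : Ioi (0:ℝ) => f ↑y from hf.comp measurable_subtype_coe).aemeasurable]
      ring
    _ = dim E * μ (ball 0 1) *
        ∫⁻ a : Ioi (0 : ℝ), (ENNReal.ofReal (a.1 ^ (dim E - 1)) * f a.1)
          ∂(Measure.comap Subtype.val volume) := by
      rw [Measure.toSphere_apply_univ, Measure.volumeIoiPow,
        lintegral_withDensity_eq_lintegral_mul _ (by fun_prop)
          (show Measurable fun y : Ioi (0:ℝ) => f ↑y from hf.comp measurable_subtype_coe)]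
      congr 1
    _ = _ := by
      rw [lintegral_subtype_comap measurableSet_Ioi
        (fun a ↦ ENNReal.ofReal (a ^ (dim E - 1)) * f a)]
end aux

lemma my_sin_half_sq (x : ℝ) (hx : |x| ≤ Real.pi) : (x / Real.pi) ^ 2 ≤ Real.sin (x / 2) ^ 2 := by
  have hπ := Real.pi_pos
  wlog hx0 : 0 ≤ x generalizing x
  · have := this (-x) (by simpa using hx) (by linarith [le_of_not_ge hx0])
    simpa [neg_div] using this
  rw [abs_of_nonneg hx0] at hx
  have h1 : x / Real.pi ≤ Real.sin (x / 2) := by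
    have := Real.mul_le_sin (x := x / 2) (by positivity) (by linarith)
    calc x / Real.pi = 2 / Real.pi * (x / 2) := by field_simp
    _ ≤ _ := this
  exact pow_le_pow_left₀ (by positivity) h1 2

theorem discrete_laplacian_G_bound
    (d : ℕ) (hd : 3 ≤ d)
    (u α : ℝ) (hu : 0 < u) (hα : 0 < α) :
    ENNReal.ofReal u *
        (∫⁻ η in {η : EuclideanSpace ℝ (Fin d) |
            (∀ j, η j ∈ Set.Icc (-Real.pi) Real.pi) ∧
            (∑ j, 4 * Real.sin (η j / 2) ^ 2) < u / α ^ 2},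
          (ENNReal.ofReal (∑ j, 4 * Real.sin (η j / 2) ^ 2))⁻¹)
        / ENNReal.ofReal ((2 * Real.pi) ^ d)
      ≤ ENNReal.ofReal
          ((d * (volume (Metric.ball (0 : EuclideanSpace ℝ (Fin d)) 1)).toReal)
              / (2 ^ (2 * d) * ((d : ℝ) - 2) * α ^ ((d : ℝ) - 2))
            * (u * min u (4 * d * α ^ 2) ^ ((d : ℝ) / 2 - 1))) := by
  have hπ := Real.pi_pos
  have hd0 : 0 < d := by omega
  haveI : Nontrivial (EuclideanSpace ℝ (Fin d)) :=
    Module.nontrivial_of_finrank_pos (R := ℝ)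
      (by rw [finrank_euclideanSpace_fin]; omega)
  set m : ℕ := d - 2 with hmdef
  have hdm : d = m + 2 := by omega
  have hm1 : 1 ≤ m := by omega
  set T : EuclideanSpace ℝ (Fin d) → ℝ := fun η => ∑ j, 4 * Real.sin (η j / 2) ^ 2 with hT
  set S : Set (EuclideanSpace ℝ (Fin d)) :=
    {η | (∀ j, η j ∈ Set.Icc (-Real.pi) Real.pi) ∧ T η < u / α ^ 2} with hS
  set r : ℝ := min (u / α ^ 2) (4 * d) with hrdef
  have hr : 0 < r := lt_min (by positivity) (by positivity)
  set R : ℝ := Real.pi / 2 * Real.sqrt r with hRdef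
  have hR : 0 < R := by positivity
  set f : ℝ → ℝ≥0∞ := fun y =>
    if y ≤ R then ENNReal.ofReal (Real.pi ^ 2 / 4) * (ENNReal.ofReal (y ^ 2))⁻¹ else 0 with hf
  have hfm : Measurable f := Measurable.ite measurableSet_Iic (by fun_prop) measurable_const
  have hnorm_sq : ∀ η : EuclideanSpace ℝ (Fin d), ‖η‖ ^ 2 = ∑ j, (η j) ^ 2 := by
    intro η
    rw [EuclideanSpace.norm_eq, Real.sq_sqrt (by positivity)]
    simp [Real.norm_eq_abs, sq_abs]
  -- lower bound on T
  have hTlb : ∀ η ∈ S, 4 / Real.pi ^ 2 * ‖η‖ ^ 2 ≤ T η := by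
    intro η hη
    rw [hnorm_sq, Finset.mul_sum]
    refine Finset.sum_le_sum fun j _ => ?_
    have hj := hη.1 j
    have := my_sin_half_sq (η j) (abs_le.mpr ⟨hj.1, hj.2⟩)
    rw [div_pow] at this
    calc 4 / Real.pi ^ 2 * (η j) ^ 2 = 4 * ((η j) ^ 2 / Real.pi ^ 2) := by ring
    _ ≤ 4 * Real.sin (η j / 2) ^ 2 := by nlinarith
  -- norm bound
  have hnormR : ∀ η ∈ S, ‖η‖ ≤ R := by
    intro η hη
    have h1 : ‖η‖ ^ 2 ≤ Real.pi ^ 2 / 4 * (u / α ^ 2) := by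
      have h5 := hTlb η hη
      have h2 := hη.2
      have h6 : ‖η‖ ^ 2 = Real.pi ^ 2 / 4 * (4 / Real.pi ^ 2 * ‖η‖ ^ 2) := by
        field_simp
      rw [h6]
      exact mul_le_mul_of_nonneg_left (le_of_lt (lt_of_le_of_lt h5 h2)) (by positivity)
    have h3 : ‖η‖ ^ 2 ≤ Real.pi ^ 2 / 4 * (4 * d) := by
      rw [hnorm_sq]
      calc (∑ j, (η j) ^ 2) ≤ ∑ _j : Fin d, Real.pi ^ 2 := by
            refine Finset.sum_le_sum fun j _ => ?_
            have hj := hη.1 j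
            nlinarith [hj.1, hj.2]
      _ = d * Real.pi ^ 2 := by simp [mul_comm]
      _ = Real.pi ^ 2 / 4 * (4 * d) := by ring
    have h4 : ‖η‖ ^ 2 ≤ Real.pi ^ 2 / 4 * r := by
      rw [hrdef]
      rcases min_cases (u / α ^ 2) (4 * (d:ℝ)) with ⟨h5, _⟩ | ⟨h5, _⟩ <;> rw [h5]
      exacts [h1, h3]
    calc ‖η‖ = Real.sqrt (‖η‖ ^ 2) := (Real.sqrt_sq (norm_nonneg η)).symm
    _ ≤ Real.sqrt (Real.pi ^ 2 / 4 * r) := Real.sqrt_le_sqrt h4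
    _ = R := by
        rw [hRdef, Real.sqrt_mul (by positivity),
          show Real.pi ^ 2 / 4 = (Real.pi / 2) ^ 2 by ring,
          Real.sqrt_sq (by positivity)]
  -- domination
  have hdom : ∀ η ∈ S, (ENNReal.ofReal (T η))⁻¹ ≤ f ‖η‖ := by
    intro η hη
    rw [hf]
    simp only [if_pos (hnormR η hη)]
    have h1 : ENNReal.ofReal (4 / Real.pi ^ 2 * ‖η‖ ^ 2) ≤ ENNReal.ofReal (T η) :=
      ENNReal.ofReal_le_ofReal (hTlb η hη)
    calc (ENNReal.ofReal (T η))⁻¹ ≤ (ENNReal.ofReal (4 / Real.pi ^ 2 * ‖η‖ ^ 2))⁻¹ :=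
          ENNReal.inv_le_inv' h1
    _ = ENNReal.ofReal (Real.pi ^ 2 / 4) * (ENNReal.ofReal (‖η‖ ^ 2))⁻¹ := by
        rw [ENNReal.ofReal_mul (by positivity),
          ENNReal.mul_inv (Or.inl (ne_of_gt (ENNReal.ofReal_pos.mpr (by positivity))))
            (Or.inl ENNReal.ofReal_ne_top),
          ← ENNReal.ofReal_inv_of_pos (by positivity)]
        congr 2
        rw [inv_div]
  -- main integral bound
  have hV : volume (Metric.ball (0 : EuclideanSpace ℝ (Fin d)) 1) < ⊤ := measure_ball_lt_top
  set V : ℝ := (volume (Metric.ball (0 : EuclideanSpace ℝ (Fin d)) 1)).toReal with hVdef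
  have hV0 : 0 ≤ V := ENNReal.toReal_nonneg
  have hI : (∫⁻ y in Ioi (0:ℝ), ENNReal.ofReal (y ^ (d - 1)) * f y)
      = ENNReal.ofReal (Real.pi ^ 2 / 4 * (R ^ m / m)) := by
    have hcong : ∀ y ∈ Ioi (0:ℝ), ENNReal.ofReal (y ^ (d - 1)) * f y
        = (Iic R).indicator (fun y => ENNReal.ofReal (Real.pi ^ 2 / 4 * y ^ (d - 3))) y := by
      intro y hy
      have hy0 : (0:ℝ) < y := hy
      by_cases h : y ≤ R
      · rw [hf]
        simp only [if_pos h, indicator_of_mem (mem_Iic.mpr h)]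
        rw [← ENNReal.ofReal_inv_of_pos (by positivity : (0:ℝ) < y ^ 2),
          ← ENNReal.ofReal_mul (by positivity),
          ← ENNReal.ofReal_mul (by positivity : (0:ℝ) ≤ y ^ (d - 1))]
        congr 1
        rw [show d - 1 = (d - 3) + 2 from by omega, pow_add]
        field_simp
      · simp [hf, h, indicator_of_notMem]
    rw [setLIntegral_congr_fun measurableSet_Ioi hcong,
      lintegral_indicator measurableSet_Iic, Measure.restrict_restrict measurableSet_Iic,
      show Iic R ∩ Ioi (0:ℝ) = Ioc 0 R from by rw [inter_comm, Ioi_inter_Iic]]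
    have hint : IntegrableOn (fun y : ℝ => Real.pi ^ 2 / 4 * y ^ (d - 3)) (Ioc 0 R) :=
      ((continuous_const.mul (continuous_pow _)).integrableOn_Icc).mono_set Ioc_subset_Icc_self
    have hnn : 0 ≤ᵐ[volume.restrict (Ioc (0:ℝ) R)]
        fun y : ℝ => Real.pi ^ 2 / 4 * y ^ (d - 3) :=
      (ae_restrict_iff' measurableSet_Ioc).mpr (ae_of_all _ fun y hy => by
        have := hy.1; positivity)
    rw [← ofReal_integral_eq_lintegral_ofReal hint hnn]
    congr 1
    rw [← intervalIntegral.integral_of_le hR.le, intervalIntegral.integral_const_mul,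
      integral_pow, show d - 3 + 1 = m from by omega]
    rw [zero_pow (by omega : m ≠ 0)]
    rw [hmdef]
    push_cast [Nat.cast_sub (show 3 ≤ d from by omega), Nat.cast_sub (show 2 ≤ d from by omega)]
    ring
  have key : (∫⁻ η in S, (ENNReal.ofReal (T η))⁻¹)
      ≤ ENNReal.ofReal (d * V * (Real.pi ^ 2 / 4 * (R ^ m / m))) := by
    calc (∫⁻ η in S, (ENNReal.ofReal (T η))⁻¹)
        ≤ ∫⁻ η in S, f ‖η‖ := setLIntegral_mono (hfm.comp measurable_norm) hdom
    _ ≤ ∫⁻ η, f ‖η‖ := setLIntegral_le_lintegral _ _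
    _ = (d : ℝ≥0∞) * volume (ball (0 : EuclideanSpace ℝ (Fin d)) 1) *
          ∫⁻ y in Ioi (0:ℝ), ENNReal.ofReal (y ^ (d - 1)) * f y := by
        rw [my_lintegral_fun_norm_addHaar volume f hfm, finrank_euclideanSpace_fin]
    _ = ENNReal.ofReal (d * V * (Real.pi ^ 2 / 4 * (R ^ m / m))) := by
        rw [hI, ← ENNReal.ofReal_toReal hV.ne, ← hVdef, ← ENNReal.ofReal_natCast d,
          ← ENNReal.ofReal_mul (by positivity), ← ENNReal.ofReal_mul (by positivity)]
  -- final arithmetic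
  have hc2 : ((d:ℝ) - 2) = (m:ℝ) := by rw [hdm]; push_cast; ring
  have hαpow : α ^ ((d:ℝ) - 2) = α ^ m := by rw [hc2, Real.rpow_natCast]
  have hminr : min u (4 * d * α ^ 2) = α ^ 2 * r := by
    rw [hrdef, mul_min_of_nonneg _ _ (by positivity : (0:ℝ) ≤ α ^ 2)]
    congr 1
    · field_simp
    · ring
  have hsqpow : (Real.sqrt r) ^ m = r ^ ((m:ℝ)/2) := by
    rw [Real.sqrt_eq_rpow, ← Real.rpow_natCast (r ^ ((1:ℝ)/2)) m, ← Real.rpow_mul hr.le]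
    congr 1
    ring
  have hrpow : (α ^ 2 * r) ^ ((d:ℝ)/2 - 1) = α ^ m * (Real.sqrt r) ^ m := by
    have he : (d:ℝ)/2 - 1 = (m:ℝ)/2 := by rw [hdm]; push_cast; ring
    rw [he, Real.mul_rpow (by positivity) hr.le, hsqpow]
    congr 1
    rw [← Real.rpow_natCast α 2, ← Real.rpow_mul hα.le, ← Real.rpow_natCast α m]
    congr 1
    ring
  have hreal : u * ((d:ℝ) * V * (Real.pi ^ 2 / 4 * (R ^ m / m))) / (2 * Real.pi) ^ d
      ≤ (d : ℝ) * V / (2 ^ (2 * d) * ((d:ℝ) - 2) * α ^ ((d:ℝ) - 2))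
        * (u * (min u (4 * d * α ^ 2)) ^ ((d:ℝ)/2 - 1)) := by
    rw [hminr, hrpow, hαpow, hc2, hRdef, mul_pow]
    apply le_of_eq
    have hm0 : ((m:ℝ)) ≠ 0 := by positivity
    have hπ0 : Real.pi ≠ 0 := hπ.ne'
    have hα0 : α ≠ 0 := hα.ne'
    rw [hdm]
    push_cast
    field_simp
    have h2 : ((1:ℝ)/2)^m * 2^(m*2) = 2^m := by rw [pow_mul', ← mul_pow]; norm_num
    linear_combination (V * Real.pi ^ 2 * Real.pi ^ m * 16) * h2
  calc (ENNReal.ofReal u * ∫⁻ η in S, (ENNReal.ofReal (T η))⁻¹)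
        / ENNReal.ofReal ((2 * Real.pi) ^ d)
      ≤ (ENNReal.ofReal u * ENNReal.ofReal ((d:ℝ) * V * (Real.pi ^ 2 / 4 * (R ^ m / m))))
        / ENNReal.ofReal ((2 * Real.pi) ^ d) :=
        ENNReal.div_le_div_right (mul_le_mul_of_nonneg_left key (zero_le)) _
  _ = ENNReal.ofReal (u * ((d:ℝ) * V * (Real.pi ^ 2 / 4 * (R ^ m / m))) / (2 * Real.pi) ^ d) := by
        rw [← ENNReal.ofReal_mul hu.le, ← ENNReal.ofReal_div_of_pos (by positivity)]
  _ ≤ _ := ENNReal.ofReal_le_ofReal hreal
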